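/- Let z, w ∈ ℂ with z ≠ 0, and set x = w/z̄ and y = 2z². Then -2/((|x|²+1)²·|y|²) + Im(x̄·y) = -1/(2(|w|²+|z|²)²) + 2·Im(w̄·z). -/

import Mathlib

/-- The Levi-Civita pull-back identity: with `x = w/z̄` and `y = 2z²`,
`-2/((|x|²+1)²|y|²) + Im(x̄y) = -1/(2(|w|²+|z|²)²) + 2 Im(w̄z)`. -/
theorem leviCivita_pullback_hamiltonian (z w : ℂ) (hz : z ≠ 0) :
    -2 / ((‖w / (starRingEnd ℂ z)‖ ^ 2 + 1) ^ 2
        * ‖2 * z ^ 2‖ ^ 2)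
      + ((starRingEnd ℂ (w / (starRingEnd ℂ z))) * (2 * z ^ 2)).im
    = -1 / (2 * (‖w‖ ^ 2 + ‖z‖ ^ 2) ^ 2)
      + 2 * ((starRingEnd ℂ w) * z).im := by
  have hz' : ‖z‖ ≠ 0 := by simpa using hz
  have him : (starRingEnd ℂ (w / (starRingEnd ℂ z))) * (2 * z ^ 2)
      = 2 * ((starRingEnd ℂ w) * z) := by
    rw [map_div₀, Complex.conj_conj]; field_simp
  rw [him]
  simp only [map_div₀, map_mul, norm_div, norm_mul, Complex.norm_conj, Complex.norm_two, norm_pow,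
    Complex.mul_im]
  have h2 : (2 : ℂ).im = 0 := rfl
  have h2r : (2 : ℂ).re = 2 := rfl
  rw [h2, h2r]
  ring_nf
  field_simp
  ring
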